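/- Let F be a singular fiber of a P^1-ruling of a smooth complete surface with a unique (−1)-curve C. Then the multiplicity μ(C) of C in F is greater than 1, and there are exactly two components of F of multiplicity one; they are tips of the fiber. -/

import Mathlib

/-- A configuration of curves in a fiber of a `ℙ¹`-ruling: a finite set of
components (labelled by naturals), the incidence relation, the
self-intersection `w` and the multiplicity `μ` of each component. -/
structure Config where
  V : Finset ℕ
  adj : ℕ → ℕ → Bool
  w : ℕ → ℤ
  μ : ℕ → ℕ

namespace Config

/-- Blowup at a point lying on the single component `c`: a new component `v`
with self-intersection `−1` and multiplicity `μ(c)` appears, `c² ↦ c² − 1`. -/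
def blowupFree (F : Config) (c v : ℕ) : Config where
  V := insert v F.V
  adj := fun x y =>
    F.adj x y || (x == c && y == v) || (x == v && y == c)
  w := Function.update (Function.update F.w c (F.w c - 1)) v (-1)
  μ := Function.update F.μ v (F.μ c)

/-- Blowup at the intersection point of the components `c` and `c'`: a new
component `v` of self-intersection `−1` and multiplicity `μ(c) + μ(c')`
separates `c` and `c'`, and `c² ↦ c² − 1`, `c'² ↦ c'² − 1`. -/
def blowupCross (F : Config) (c c' v : ℕ) : Config where
  V := insert v F.V
  adj := fun x y =>
    (F.adj x y && !((x == c && y == c') || (x == c' && y == c)))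
      || (x == c && y == v) || (x == v && y == c)
      || (x == c' && y == v) || (x == v && y == c')
  w := Function.update (Function.update (Function.update F.w c (F.w c - 1))
        c' (F.w c' - 1)) v (-1)
  μ := Function.update F.μ v (F.μ c + F.μ c')

/-- Fibers of a `ℙ¹`-ruling of a smooth complete surface: every fiber is
produced from a smooth 0-curve (of multiplicity one) by a sequence of
blowups. -/
inductive IsFiber : Config → Prop
  | base : IsFiber ⟨{0}, fun _ _ => false, fun _ => 0, fun _ => 1⟩
  | free (F : Config) (c v : ℕ) : IsFiber F → c ∈ F.V → v ∉ F.V →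
      IsFiber (F.blowupFree c v)
  | cross (F : Config) (c c' v : ℕ) : IsFiber F → c ∈ F.V → c' ∈ F.V →
      F.adj c c' = true → v ∉ F.V → IsFiber (F.blowupCross c c' v)

end Config

namespace UMOCAux
open Config
variable {F : Config} {a b c v x y : ℕ}

lemma adj_free_iff : (F.blowupFree c v).adj x y = true ↔
    (F.adj x y = true ∨ (x = c ∧ y = v) ∨ (x = v ∧ y = c)) := by
  simp [Config.blowupFree]; tauto

lemma adj_cross_iff : (F.blowupCross a b v).adj x y = true ↔
    ((F.adj x y = true ∧ ¬((x = a ∧ y = b) ∨ (x = b ∧ y = a)))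
      ∨ (x = a ∧ y = v) ∨ (x = v ∧ y = a) ∨ (x = b ∧ y = v) ∨ (x = v ∧ y = b)) := by
  simp [Config.blowupCross]; tauto

lemma V_free : (F.blowupFree c v).V = insert v F.V := rfl
lemma V_cross : (F.blowupCross a b v).V = insert v F.V := rfl

lemma wfree_v : (F.blowupFree c v).w v = -1 := by
  simp [Config.blowupFree]
lemma wfree_c (hcv : c ≠ v) : (F.blowupFree c v).w c = F.w c - 1 := by
  simp [Config.blowupFree, Function.update_of_ne hcv]
lemma wfree_other (hxv : x ≠ v) (hxc : x ≠ c) : (F.blowupFree c v).w x = F.w x := by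
  simp [Config.blowupFree, Function.update_of_ne hxv, Function.update_of_ne hxc]
lemma mufree_v : (F.blowupFree c v).μ v = F.μ c := by
  simp [Config.blowupFree]
lemma mufree_other (hxv : x ≠ v) : (F.blowupFree c v).μ x = F.μ x := by
  simp [Config.blowupFree, Function.update_of_ne hxv]

lemma wcross_v : (F.blowupCross a b v).w v = -1 := by
  simp [Config.blowupCross]
lemma wcross_a (hav : a ≠ v) (hab : a ≠ b) : (F.blowupCross a b v).w a = F.w a - 1 := by
  simp [Config.blowupCross, Function.update_of_ne hav, Function.update_of_ne hab]
lemma wcross_b (hbv : b ≠ v) (hab : a ≠ b) : (F.blowupCross a b v).w b = F.w b - 1 := by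
  simp [Config.blowupCross, Function.update_of_ne hbv, Function.update_of_ne hab.symm]
lemma wcross_other (hxv : x ≠ v) (hxa : x ≠ a) (hxb : x ≠ b) :
    (F.blowupCross a b v).w x = F.w x := by
  simp [Config.blowupCross, Function.update_of_ne hxv, Function.update_of_ne hxa,
    Function.update_of_ne hxb]
lemma mucross_v : (F.blowupCross a b v).μ v = F.μ a + F.μ b := by
  simp [Config.blowupCross]
lemma mucross_other (hxv : x ≠ v) : (F.blowupCross a b v).μ x = F.μ x := by
  simp [Config.blowupCross, Function.update_of_ne hxv]

lemma blowupCross_comm (hab : a ≠ b) :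
    F.blowupCross a b v = F.blowupCross b a v := by
  unfold Config.blowupCross
  congr 1
  · funext x y
    exact (by decide : ∀ e p q r s t u : Bool,
      ((e && !((p && q) || (r && s))) || (p && t) || (u && s) || (r && t) || (u && q)) =
      ((e && !((r && s) || (p && q))) || (r && t) || (u && q) || (p && t) || (u && s)))
      (F.adj x y) (x == a) (y == b) (x == b) (y == a) (y == v) (x == v)
  · rw [Function.update_comm hab]
  · funext x
    rcases eq_or_ne x v with rfl | hxv
    · simp [Nat.add_comm]
    · rw [Function.update_of_ne hxv, Function.update_of_ne hxv]

/-- The structural invariant of fibers. -/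
structure Inv (F : Config) : Prop where
  supp : ∀ ⦃x y : ℕ⦄, F.adj x y = true → x ∈ F.V ∧ y ∈ F.V
  symm : ∀ x y, F.adj x y = F.adj y x
  irrefl : ∀ x, F.adj x x = false
  mupos : ∀ x, 1 ≤ F.μ x
  single : F.V.card = 1 → ∀ x ∈ F.V, F.w x = 0
  wneg : 2 ≤ F.V.card → ∀ x ∈ F.V, F.w x ≤ -1
  fib : ∀ x ∈ F.V, (∑ u ∈ F.V.filter (fun u => F.adj x u = true), (F.μ u : ℤ))
      = (F.μ x : ℤ) * (-F.w x)
  tot : (∑ x ∈ F.V, (F.μ x : ℤ) * (F.w x + 2)) = 2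
  conn : ∀ x ∈ F.V, ∀ y ∈ F.V,
      Relation.ReflTransGen (fun p q => F.adj p q = true) x y

lemma Inv.not_adj_right (hI : Inv F) (hv : v ∉ F.V) : F.adj x v = false := by
  rw [Bool.eq_false_iff]
  exact fun h => hv (hI.supp h).2

lemma Inv.not_adj_left (hI : Inv F) (hv : v ∉ F.V) : F.adj v x = false := by
  rw [Bool.eq_false_iff]
  exact fun h => hv (hI.supp h).1

/- filter computations for the free blowup -/
lemma filter_free_other (hI : Inv F) (hv : v ∉ F.V) (hx : x ∈ F.V) (hxc : x ≠ c) :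
    (insert v F.V).filter (fun u => (F.blowupFree c v).adj x u = true)
      = F.V.filter (fun u => F.adj x u = true) := by
  ext u
  constructor
  · intro hu
    obtain ⟨h1, h2⟩ := Finset.mem_filter.mp hu
    rcases adj_free_iff.mp h2 with h | ⟨h3, h4⟩ | ⟨h3, h4⟩
    · exact Finset.mem_filter.mpr ⟨(hI.supp h).2, h⟩
    · exact absurd h3 hxc
    · exact absurd (h3 ▸ hx) hv
  · intro hu
    obtain ⟨h1, h2⟩ := Finset.mem_filter.mp hu
    exact Finset.mem_filter.mpr ⟨Finset.mem_insert_of_mem h1, adj_free_iff.mpr (Or.inl h2)⟩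

lemma filter_free_c (hI : Inv F) (hc : c ∈ F.V) (hv : v ∉ F.V) :
    (insert v F.V).filter (fun u => (F.blowupFree c v).adj c u = true)
      = insert v (F.V.filter (fun u => F.adj c u = true)) := by
  have hcv : c ≠ v := fun h => hv (h ▸ hc)
  ext u
  constructor
  · intro hu
    obtain ⟨h1, h2⟩ := Finset.mem_filter.mp hu
    rcases adj_free_iff.mp h2 with h | ⟨h3, h4⟩ | ⟨h3, h4⟩
    · exact Finset.mem_insert_of_mem (Finset.mem_filter.mpr ⟨(hI.supp h).2, h⟩)
    · exact h4 ▸ Finset.mem_insert_self _ _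
    · exact absurd h3 hcv
  · intro hu
    rcases Finset.mem_insert.mp hu with rfl | hu'
    · exact Finset.mem_filter.mpr ⟨Finset.mem_insert_self _ _,
        adj_free_iff.mpr (Or.inr (Or.inl ⟨rfl, rfl⟩))⟩
    · obtain ⟨h1, h2⟩ := Finset.mem_filter.mp hu'
      exact Finset.mem_filter.mpr ⟨Finset.mem_insert_of_mem h1, adj_free_iff.mpr (Or.inl h2)⟩

lemma filter_free_v (hI : Inv F) (hc : c ∈ F.V) (hv : v ∉ F.V) :
    (insert v F.V).filter (fun u => (F.blowupFree c v).adj v u = true) = {c} := by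
  have hcv : c ≠ v := fun h => hv (h ▸ hc)
  ext u
  rw [Finset.mem_singleton]
  constructor
  · intro hu
    obtain ⟨h1, h2⟩ := Finset.mem_filter.mp hu
    rcases adj_free_iff.mp h2 with h | ⟨h3, h4⟩ | ⟨h3, h4⟩
    · exact absurd (hI.supp h).1 hv
    · exact absurd h3.symm hcv
    · exact h4
  · rintro rfl
    exact Finset.mem_filter.mpr ⟨Finset.mem_insert_of_mem hc,
      adj_free_iff.mpr (Or.inr (Or.inr ⟨rfl, rfl⟩))⟩

/- filter computations for the cross blowup -/
lemma filter_cross_other (hI : Inv F) (hv : v ∉ F.V) (hx : x ∈ F.V)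
    (hxa : x ≠ a) (hxb : x ≠ b) :
    (insert v F.V).filter (fun u => (F.blowupCross a b v).adj x u = true)
      = F.V.filter (fun u => F.adj x u = true) := by
  ext u
  constructor
  · intro hu
    obtain ⟨h1, h2⟩ := Finset.mem_filter.mp hu
    rcases adj_cross_iff.mp h2 with ⟨h, _⟩ | ⟨h3, h4⟩ | ⟨h3, h4⟩ | ⟨h3, h4⟩ | ⟨h3, h4⟩
    · exact Finset.mem_filter.mpr ⟨(hI.supp h).2, h⟩
    · exact absurd h3 hxa
    · exact absurd (h3 ▸ hx) hv
    · exact absurd h3 hxb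
    · exact absurd (h3 ▸ hx) hv
  · intro hu
    obtain ⟨h1, h2⟩ := Finset.mem_filter.mp hu
    refine Finset.mem_filter.mpr ⟨Finset.mem_insert_of_mem h1, adj_cross_iff.mpr (Or.inl ⟨h2, ?_⟩)⟩
    rintro (⟨h3, h4⟩ | ⟨h3, h4⟩)
    · exact hxa h3
    · exact hxb h3

lemma filter_cross_a (hI : Inv F) (ha : a ∈ F.V) (hb : b ∈ F.V) (hv : v ∉ F.V) :
    (insert v F.V).filter (fun u => (F.blowupCross a b v).adj a u = true)
      = insert v ((F.V.filter (fun u => F.adj a u = true)).erase b) := by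
  have hav : a ≠ v := fun h => hv (h ▸ ha)
  ext u
  constructor
  · intro hu
    obtain ⟨h1, h2⟩ := Finset.mem_filter.mp hu
    rcases adj_cross_iff.mp h2 with ⟨h, hn⟩ | ⟨h3, h4⟩ | ⟨h3, h4⟩ | ⟨h3, h4⟩ | ⟨h3, h4⟩
    · refine Finset.mem_insert_of_mem (Finset.mem_erase.mpr
        ⟨?_, Finset.mem_filter.mpr ⟨(hI.supp h).2, h⟩⟩)
      intro hub
      exact hn (Or.inl ⟨rfl, hub⟩)
    · exact h4 ▸ Finset.mem_insert_self _ _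
    · exact absurd h3 hav
    · exact h4 ▸ Finset.mem_insert_self _ _
    · exact absurd h3 hav
  · intro hu
    rcases Finset.mem_insert.mp hu with rfl | hu'
    · exact Finset.mem_filter.mpr ⟨Finset.mem_insert_self _ _,
        adj_cross_iff.mpr (Or.inr (Or.inl ⟨rfl, rfl⟩))⟩
    · obtain ⟨hub, hu2⟩ := Finset.mem_erase.mp hu'
      obtain ⟨h1, h2⟩ := Finset.mem_filter.mp hu2
      refine Finset.mem_filter.mpr ⟨Finset.mem_insert_of_mem h1,
        adj_cross_iff.mpr (Or.inl ⟨h2, ?_⟩)⟩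
      rintro (⟨h3, h4⟩ | ⟨h3, h4⟩)
      · exact hub h4
      · exact hub (h4.trans h3)

lemma filter_cross_v (hI : Inv F) (ha : a ∈ F.V) (hb : b ∈ F.V) (hv : v ∉ F.V) :
    (insert v F.V).filter (fun u => (F.blowupCross a b v).adj v u = true)
      = {a, b} := by
  have hav : a ≠ v := fun h => hv (h ▸ ha)
  have hbv : b ≠ v := fun h => hv (h ▸ hb)
  ext u
  rw [Finset.mem_insert, Finset.mem_singleton]
  constructor
  · intro hu
    obtain ⟨h1, h2⟩ := Finset.mem_filter.mp hu
    rcases adj_cross_iff.mp h2 with ⟨h, _⟩ | ⟨h3, h4⟩ | ⟨h3, h4⟩ | ⟨h3, h4⟩ | ⟨h3, h4⟩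
    · exact absurd (hI.supp h).1 hv
    · exact absurd h3.symm hav
    · exact Or.inl h4
    · exact absurd h3.symm hbv
    · exact Or.inr h4
  · rintro (rfl | rfl)
    · exact Finset.mem_filter.mpr ⟨Finset.mem_insert_of_mem ha,
        adj_cross_iff.mpr (Or.inr (Or.inr (Or.inl ⟨rfl, rfl⟩)))⟩
    · exact Finset.mem_filter.mpr ⟨Finset.mem_insert_of_mem hb,
        adj_cross_iff.mpr (Or.inr (Or.inr (Or.inr (Or.inr ⟨rfl, rfl⟩))))⟩

lemma card_free (hv : v ∉ F.V) : (F.blowupFree c v).V.card = F.V.card + 1 :=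
  Finset.card_insert_of_notMem hv

lemma card_cross (hv : v ∉ F.V) : (F.blowupCross a b v).V.card = F.V.card + 1 :=
  Finset.card_insert_of_notMem hv

lemma inv_free (hI : Inv F) (hc : c ∈ F.V) (hv : v ∉ F.V) : Inv (F.blowupFree c v) := by
  have hcv : c ≠ v := fun h => hv (h ▸ hc)
  have hcard1 : 1 ≤ F.V.card := Finset.card_pos.mpr ⟨c, hc⟩
  constructor
  -- supp
  · intro x y h
    rcases adj_free_iff.mp h with h' | ⟨rfl, rfl⟩ | ⟨rfl, rfl⟩
    · exact ⟨Finset.mem_insert_of_mem (hI.supp h').1, Finset.mem_insert_of_mem (hI.supp h').2⟩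
    · exact ⟨Finset.mem_insert_of_mem hc, Finset.mem_insert_self _ _⟩
    · exact ⟨Finset.mem_insert_self _ _, Finset.mem_insert_of_mem hc⟩
  -- symm
  · intro x y
    rw [Bool.eq_iff_iff, adj_free_iff, adj_free_iff, hI.symm x y]
    tauto
  -- irrefl
  · intro x
    rw [Bool.eq_false_iff]
    intro h
    rcases adj_free_iff.mp h with h' | ⟨h3, h4⟩ | ⟨h3, h4⟩
    · rw [hI.irrefl] at h'; exact Bool.false_ne_true h'
    · exact hcv (h3.symm.trans h4)
    · exact hcv (h4.symm.trans h3)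
  -- mupos
  · intro x
    rcases eq_or_ne x v with rfl | hxv
    · rw [mufree_v]; exact hI.mupos c
    · rw [mufree_other hxv]; exact hI.mupos x
  -- single
  · intro h1
    rw [card_free hv] at h1
    omega
  -- wneg
  · intro _ x hx
    rcases Finset.mem_insert.mp hx with rfl | hx'
    · rw [wfree_v]
    · rcases eq_or_ne x c with rfl | hxc
      · rw [wfree_c hcv]
        rcases Nat.lt_or_ge F.V.card 2 with h2 | h2
        · have : F.V.card = 1 := by omega
          have := hI.single this x hx'
          omega
        · have := hI.wneg h2 x hx'
          omega
      · have hxv : x ≠ v := fun h => hv (h ▸ hx')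
        rw [wfree_other hxv hxc]
        rcases Nat.lt_or_ge F.V.card 2 with h2 | h2
        · have h1 : F.V.card = 1 := by omega
          obtain ⟨y, hy⟩ := Finset.card_eq_one.mp h1
          rw [hy] at hx' hc
          exact absurd ((Finset.mem_singleton.mp hx').trans
            (Finset.mem_singleton.mp hc).symm) hxc
        · exact hI.wneg h2 x hx'
  -- fib
  · intro x hx
    rcases eq_or_ne x v with rfl | hxv
    · rw [V_free, filter_free_v hI hc hv,
        Finset.sum_singleton, mufree_other hcv, mufree_v, wfree_v]
      ring
    · have hx' : x ∈ F.V := (Finset.mem_insert.mp hx).resolve_left hxv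
      have hcongr : ∀ y : ℕ, ∑ u ∈ F.V.filter (fun u => F.adj y u = true),
          ((F.blowupFree c v).μ u : ℤ)
          = ∑ u ∈ F.V.filter (fun u => F.adj y u = true), (F.μ u : ℤ) := by
        intro y
        refine Finset.sum_congr rfl (fun u hu => ?_)
        have huv : u ≠ v := fun h => hv (h ▸ (Finset.mem_filter.mp hu).1)
        rw [mufree_other huv]
      rcases eq_or_ne x c with rfl | hxc
      · have hnv : v ∉ F.V.filter (fun u => F.adj x u = true) :=
          fun h => hv (Finset.mem_filter.mp h).1
        rw [V_free, filter_free_c hI hc hv,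
          Finset.sum_insert hnv, mufree_v, mufree_other hcv, wfree_c hcv, hcongr x,
          hI.fib x hx']
        ring
      · rw [V_free,
          filter_free_other hI hv hx' hxc, mufree_other hxv, wfree_other hxv hxc,
          hcongr x, hI.fib x hx']
  -- tot
  · rw [V_free, Finset.sum_insert hv,
      mufree_v, wfree_v]
    have hcongr : ∑ x ∈ F.V, ((F.blowupFree c v).μ x : ℤ) * ((F.blowupFree c v).w x + 2)
        = ∑ x ∈ F.V, ((F.μ x : ℤ) * (F.w x + 2) + (if x = c then -(F.μ c : ℤ) else 0)) := by
      refine Finset.sum_congr rfl (fun x hx => ?_)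
      have hxv : x ≠ v := fun h => hv (h ▸ hx)
      rw [mufree_other hxv]
      rcases eq_or_ne x c with rfl | hxc
      · rw [wfree_c hcv, if_pos rfl]; ring
      · rw [wfree_other hxv hxc, if_neg hxc]; ring
    rw [hcongr, Finset.sum_add_distrib, hI.tot, Finset.sum_ite_eq' F.V c
      (fun _ => -(F.μ c : ℤ)), if_pos hc]
    ring
  -- conn
  · set R : ℕ → ℕ → Prop := fun p q => (F.blowupFree c v).adj p q = true with hR
    have hlift : ∀ p q, Relation.ReflTransGen (fun p q => F.adj p q = true) p q →
        Relation.ReflTransGen R p q :=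
      fun p q h => Relation.ReflTransGen.mono (fun _ _ h' => adj_free_iff.mpr (Or.inl h')) p q h
    have hRcv : R c v := adj_free_iff.mpr (Or.inr (Or.inl ⟨rfl, rfl⟩))
    have hRvc : R v c := adj_free_iff.mpr (Or.inr (Or.inr ⟨rfl, rfl⟩))
    intro x hx y hy
    rcases Finset.mem_insert.mp hx with rfl | hx' <;>
      rcases Finset.mem_insert.mp hy with rfl | hy'
    · exact Relation.ReflTransGen.refl
    · exact Relation.ReflTransGen.trans (Relation.ReflTransGen.single hRvc)
        (hlift _ _ (hI.conn c hc y hy'))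
    · exact Relation.ReflTransGen.trans (hlift _ _ (hI.conn x hx' c hc))
        (Relation.ReflTransGen.single hRcv)
    · exact hlift _ _ (hI.conn x hx' y hy')

lemma fib_cross_a (hI : Inv F) (ha : a ∈ F.V) (hb : b ∈ F.V)
    (hadj : F.adj a b = true) (hv : v ∉ F.V) :
    (∑ u ∈ (F.blowupCross a b v).V.filter
        (fun u => (F.blowupCross a b v).adj a u = true), ((F.blowupCross a b v).μ u : ℤ))
      = ((F.blowupCross a b v).μ a : ℤ) * (-(F.blowupCross a b v).w a) := by
  have hab : a ≠ b := by
    intro h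
    rw [h, hI.irrefl] at hadj
    exact Bool.false_ne_true hadj
  have hav : a ≠ v := fun h => hv (h ▸ ha)
  have hbmem : b ∈ F.V.filter (fun u => F.adj a u = true) := Finset.mem_filter.mpr ⟨hb, hadj⟩
  have hnv : v ∉ (F.V.filter (fun u => F.adj a u = true)).erase b :=
    fun h => hv (Finset.mem_filter.mp (Finset.mem_erase.mp h).2).1
  rw [V_cross, filter_cross_a hI ha hb hv, Finset.sum_insert hnv, mucross_v,
    mucross_other hav, wcross_a hav hab]
  have hcongr : ∑ u ∈ (F.V.filter (fun u => F.adj a u = true)).erase b,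
      ((F.blowupCross a b v).μ u : ℤ)
      = ∑ u ∈ (F.V.filter (fun u => F.adj a u = true)).erase b, (F.μ u : ℤ) := by
    refine Finset.sum_congr rfl (fun u hu => ?_)
    have huv : u ≠ v := fun h => hv (h ▸ (Finset.mem_filter.mp (Finset.mem_erase.mp hu).2).1)
    rw [mucross_other huv]
  rw [hcongr, Finset.sum_erase_eq_sub hbmem, hI.fib a ha]
  push_cast
  ring

lemma inv_cross (hI : Inv F) (ha : a ∈ F.V) (hb : b ∈ F.V)
    (hadj : F.adj a b = true) (hv : v ∉ F.V) : Inv (F.blowupCross a b v) := by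
  have hab : a ≠ b := by
    intro h
    rw [h, hI.irrefl] at hadj
    exact Bool.false_ne_true hadj
  have hav : a ≠ v := fun h => hv (h ▸ ha)
  have hbv : b ≠ v := fun h => hv (h ▸ hb)
  have hadj' : F.adj b a = true := (hI.symm a b) ▸ hadj
  have hcard2 : 2 ≤ F.V.card := Finset.one_lt_card.mpr ⟨a, ha, b, hb, hab⟩
  constructor
  -- supp
  · intro x y h
    rcases adj_cross_iff.mp h with ⟨h', _⟩ | ⟨rfl, rfl⟩ | ⟨rfl, rfl⟩ | ⟨rfl, rfl⟩ | ⟨rfl, rfl⟩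
    · exact ⟨Finset.mem_insert_of_mem (hI.supp h').1, Finset.mem_insert_of_mem (hI.supp h').2⟩
    · exact ⟨Finset.mem_insert_of_mem ha, Finset.mem_insert_self _ _⟩
    · exact ⟨Finset.mem_insert_self _ _, Finset.mem_insert_of_mem ha⟩
    · exact ⟨Finset.mem_insert_of_mem hb, Finset.mem_insert_self _ _⟩
    · exact ⟨Finset.mem_insert_self _ _, Finset.mem_insert_of_mem hb⟩
  -- symm
  · intro x y
    rw [Bool.eq_iff_iff, adj_cross_iff, adj_cross_iff, hI.symm x y]
    tauto
  -- irrefl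
  · intro x
    rw [Bool.eq_false_iff]
    intro h
    rcases adj_cross_iff.mp h with ⟨h', _⟩ | ⟨h3, h4⟩ | ⟨h3, h4⟩ | ⟨h3, h4⟩ | ⟨h3, h4⟩
    · rw [hI.irrefl] at h'; exact Bool.false_ne_true h'
    · exact hav (h3.symm.trans h4)
    · exact hav (h4.symm.trans h3)
    · exact hbv (h3.symm.trans h4)
    · exact hbv (h4.symm.trans h3)
  -- mupos
  · intro x
    rcases eq_or_ne x v with rfl | hxv
    · rw [mucross_v]; have := hI.mupos a; omega
    · rw [mucross_other hxv]; exact hI.mupos x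
  -- single
  · intro h1
    rw [card_cross hv] at h1
    omega
  -- wneg
  · intro _ x hx
    rcases Finset.mem_insert.mp hx with rfl | hx'
    · rw [wcross_v]
    · rcases eq_or_ne x a with rfl | hxa
      · rw [wcross_a hav hab]
        have := hI.wneg hcard2 x hx'
        omega
      · rcases eq_or_ne x b with rfl | hxb
        · rw [wcross_b hbv hab]
          have := hI.wneg hcard2 x hx'
          omega
        · have hxv : x ≠ v := fun h => hv (h ▸ hx')
          rw [wcross_other hxv hxa hxb]
          exact hI.wneg hcard2 x hx'
  -- fib
  · intro x hx
    rcases eq_or_ne x v with rfl | hxv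
    · rw [V_cross, filter_cross_v hI ha hb hv, Finset.sum_pair hab, mucross_v,
        mucross_other hav, mucross_other hbv, wcross_v]
      push_cast
      ring
    · have hx' : x ∈ F.V := (Finset.mem_insert.mp hx).resolve_left hxv
      rcases eq_or_ne x a with rfl | hxa
      · exact fib_cross_a hI ha hb hadj hv
      · rcases eq_or_ne x b with rfl | hxb
        · rw [blowupCross_comm hab]
          exact fib_cross_a hI hb ha hadj' hv
        · rw [V_cross, filter_cross_other hI hv hx' hxa hxb, mucross_other hxv,
            wcross_other hxv hxa hxb]
          have hcongr : ∑ u ∈ F.V.filter (fun u => F.adj x u = true),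
              ((F.blowupCross a b v).μ u : ℤ)
              = ∑ u ∈ F.V.filter (fun u => F.adj x u = true), (F.μ u : ℤ) := by
            refine Finset.sum_congr rfl (fun u hu => ?_)
            have huv : u ≠ v := fun h => hv (h ▸ (Finset.mem_filter.mp hu).1)
            rw [mucross_other huv]
          rw [hcongr, hI.fib x hx']
  -- tot
  · rw [V_cross, Finset.sum_insert hv, mucross_v, wcross_v]
    have hcongr : ∑ x ∈ F.V, ((F.blowupCross a b v).μ x : ℤ) * ((F.blowupCross a b v).w x + 2)
        = ∑ x ∈ F.V, ((F.μ x : ℤ) * (F.w x + 2) + (if x = a then -(F.μ a : ℤ) else 0)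
            + (if x = b then -(F.μ b : ℤ) else 0)) := by
      refine Finset.sum_congr rfl (fun x hx => ?_)
      have hxv : x ≠ v := fun h => hv (h ▸ hx)
      rw [mucross_other hxv]
      rcases eq_or_ne x a with rfl | hxa
      · rw [wcross_a hav hab, if_pos rfl, if_neg hab]; ring
      · rcases eq_or_ne x b with rfl | hxb
        · rw [wcross_b hbv hab, if_neg hxa, if_pos rfl]; ring
        · rw [wcross_other hxv hxa hxb, if_neg hxa, if_neg hxb]; ring
    rw [hcongr, Finset.sum_add_distrib, Finset.sum_add_distrib, hI.tot,
      Finset.sum_ite_eq' F.V a (fun _ => -(F.μ a : ℤ)), if_pos ha,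
      Finset.sum_ite_eq' F.V b (fun _ => -(F.μ b : ℤ)), if_pos hb]
    push_cast
    ring
  -- conn
  · set R : ℕ → ℕ → Prop := fun p q => (F.blowupCross a b v).adj p q = true with hR
    have hRav : R a v := adj_cross_iff.mpr (Or.inr (Or.inl ⟨rfl, rfl⟩))
    have hRva : R v a := adj_cross_iff.mpr (Or.inr (Or.inr (Or.inl ⟨rfl, rfl⟩)))
    have hRbv : R b v := adj_cross_iff.mpr (Or.inr (Or.inr (Or.inr (Or.inl ⟨rfl, rfl⟩))))
    have hRvb : R v b := adj_cross_iff.mpr (Or.inr (Or.inr (Or.inr (Or.inr ⟨rfl, rfl⟩))))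
    have hlift0 : ∀ p q, F.adj p q = true → Relation.ReflTransGen R p q := by
      intro p q h
      by_cases h1 : p = a ∧ q = b
      · obtain ⟨rfl, rfl⟩ := h1
        exact Relation.ReflTransGen.tail (Relation.ReflTransGen.single hRav) hRvb
      · by_cases h2 : p = b ∧ q = a
        · obtain ⟨rfl, rfl⟩ := h2
          exact Relation.ReflTransGen.tail (Relation.ReflTransGen.single hRbv) hRva
        · refine Relation.ReflTransGen.single (adj_cross_iff.mpr (Or.inl ⟨h, ?_⟩))
          rintro (h3 | h3)
          · exact h1 h3
          · exact h2 h3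
    have hlift : ∀ p q, Relation.ReflTransGen (fun p q => F.adj p q = true) p q →
        Relation.ReflTransGen R p q := by
      intro p q h
      induction h with
      | refl => exact Relation.ReflTransGen.refl
      | tail h1 h2 ih => exact ih.trans (hlift0 _ _ h2)
    intro x hx y hy
    rcases Finset.mem_insert.mp hx with rfl | hx' <;>
      rcases Finset.mem_insert.mp hy with rfl | hy'
    · exact Relation.ReflTransGen.refl
    · exact Relation.ReflTransGen.trans (Relation.ReflTransGen.single hRva)
        (hlift _ _ (hI.conn a ha y hy'))
    · exact Relation.ReflTransGen.trans (hlift _ _ (hI.conn x hx' a ha))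
        (Relation.ReflTransGen.single hRav)
    · exact hlift _ _ (hI.conn x hx' y hy')

lemma inv_base : Inv ⟨{0}, fun _ _ => false, fun _ => 0, fun _ => 1⟩ := by
  constructor
  · intro x y h
    exact absurd h (by simp)
  · intro x y; rfl
  · intro x; rfl
  · intro x; exact le_refl 1
  · intro _ x _; rfl
  · intro h
    simp [Finset.card_singleton] at h
  · intro x _
    simp
  · simp
  · intro x hx y hy
    simp only [Finset.mem_singleton] at hx hy
    rw [hx, hy]

lemma inv_of_isFiber (hF : IsFiber F) : Inv F := by
  induction hF with
  | base => exact inv_base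
  | free F c v _ hc hv ih => exact inv_free ih hc hv
  | cross F c c' v _ hc hc' hadj hv ih => exact inv_cross ih hc hc' hadj hv

lemma exists_neg_one (hI : Inv F) (h2 : 2 ≤ F.V.card) : ∃ x ∈ F.V, F.w x = -1 := by
  by_contra h
  push_neg at h
  have hnp : ∀ x ∈ F.V, (F.μ x : ℤ) * (F.w x + 2) ≤ 0 := by
    intro x hx
    have h1 := hI.wneg h2 x hx
    have h3 := h x hx
    have h4 : F.w x + 2 ≤ 0 := by omega
    nlinarith [Int.natCast_nonneg (F.μ x)]
  have := Finset.sum_nonpos hnp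
  rw [hI.tot] at this
  norm_num at this

lemma mu_ge_two (hI : Inv F) (h2 : 2 ≤ F.V.card) (hc : c ∈ F.V) (hcw : F.w c = -1)
    (huniq : ∀ x ∈ F.V, F.w x = -1 → x = c) : 2 ≤ F.μ c := by
  have htot := hI.tot
  rw [← Finset.add_sum_erase F.V _ hc] at htot
  have hS : ∑ x ∈ F.V.erase c, (F.μ x : ℤ) * (F.w x + 2) ≤ 0 := by
    refine Finset.sum_nonpos (fun x hx => ?_)
    obtain ⟨hxc, hxV⟩ := Finset.mem_erase.mp hx
    have h1 := hI.wneg h2 x hxV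
    have h3 : F.w x ≠ -1 := fun h => hxc (huniq x hxV h)
    have h4 : F.w x + 2 ≤ 0 := by omega
    nlinarith [Int.natCast_nonneg (F.μ x)]
  rw [hcw] at htot
  have h5 : (2 : ℤ) ≤ (F.μ c : ℤ) := by nlinarith
  exact_mod_cast h5

/-- The conclusion of the theorem (parts 2 and 3). -/
def Good (F : Config) : Prop :=
  ∀ c, 2 ≤ F.V.card → c ∈ F.V → F.w c = -1 →
    (∀ x ∈ F.V, F.w x = -1 → x = c) →
    ((F.V.filter fun u => F.μ u = 1).card = 2 ∧
      ∀ u ∈ F.V, F.μ u = 1 → (F.V.filter fun t => F.adj u t = true).card ≤ 1)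

lemma good_free (hI : Inv F) (hc : c ∈ F.V) (hv : v ∉ F.V) (hG : Good F) :
    Good (F.blowupFree c v) := by
  intro d hcard hd hdw huniq
  have hcv : c ≠ v := fun h => hv (h ▸ hc)
  have hvd : v = d := huniq v (Finset.mem_insert_self _ _) wfree_v
  subst hvd
  rcases Nat.lt_or_ge F.V.card 2 with h1 | h2
  · exfalso
    have hcard1 : F.V.card = 1 := by
      have := Finset.card_pos.mpr ⟨c, hc⟩
      omega
    have hw0 : F.w c = 0 := hI.single hcard1 c hc
    have hwc : (F.blowupFree c v).w c = -1 := by rw [wfree_c hcv, hw0]; norm_num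
    exact hcv (huniq c (Finset.mem_insert_of_mem hc) hwc)
  · obtain ⟨x0, hx0, hx0w⟩ := exists_neg_one hI h2
    have hx0c : x0 = c := by
      by_contra hne
      have hx0v : x0 ≠ v := fun h => hv (h ▸ hx0)
      have : (F.blowupFree c v).w x0 = -1 := by rw [wfree_other hx0v hne]; exact hx0w
      exact hx0v (huniq x0 (Finset.mem_insert_of_mem hx0) this)
    have hwc : F.w c = -1 := hx0c ▸ hx0w
    have huniq' : ∀ y ∈ F.V, F.w y = -1 → y = c := by
      intro y hy hyw
      by_contra hne
      have hyv : y ≠ v := fun h => hv (h ▸ hy)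
      have : (F.blowupFree c v).w y = -1 := by rw [wfree_other hyv hne]; exact hyw
      exact hyv (huniq y (Finset.mem_insert_of_mem hy) this)
    obtain ⟨hcount, htips⟩ := hG c h2 hc hwc huniq'
    have hmu2 : 2 ≤ F.μ c := mu_ge_two hI h2 hc hwc huniq'
    constructor
    · rw [V_free, Finset.filter_insert]
      have hpv : ¬ ((F.blowupFree c v).μ v = 1) := by rw [mufree_v]; omega
      rw [if_neg hpv]
      have heq : F.V.filter (fun u => (F.blowupFree c v).μ u = 1)
          = F.V.filter (fun u => F.μ u = 1) := by
        refine Finset.filter_congr (fun u hu => ?_)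
        have huv : u ≠ v := fun h => hv (h ▸ hu)
        rw [mufree_other huv]
      rw [heq]
      exact hcount
    · intro u hu hmu
      rcases Finset.mem_insert.mp hu with rfl | hu'
      · rw [mufree_v] at hmu; omega
      · have huv : u ≠ v := fun h => hv (h ▸ hu')
        rw [mufree_other huv] at hmu
        have huc : u ≠ c := fun h => by rw [h] at hmu; omega
        rw [V_free, filter_free_other hI hv hu' huc]
        exact htips u hu' hmu

lemma good_cross_core (hI : Inv F) (ha : a ∈ F.V) (hb : b ∈ F.V)
    (hadj : F.adj a b = true) (hv : v ∉ F.V) (hG : Good F)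
    (hwa : F.w a = -1) (hwb : F.w b ≠ -1)
    (hother : ∀ y ∈ F.V, y ≠ a → y ≠ b → F.w y ≠ -1) :
    ((F.blowupCross a b v).V.filter fun u => (F.blowupCross a b v).μ u = 1).card = 2 ∧
      ∀ u ∈ (F.blowupCross a b v).V, (F.blowupCross a b v).μ u = 1 →
        ((F.blowupCross a b v).V.filter fun t => (F.blowupCross a b v).adj u t = true).card ≤ 1 := by
  have hab : a ≠ b := by
    intro h
    rw [h, hI.irrefl] at hadj
    exact Bool.false_ne_true hadj
  have hav : a ≠ v := fun h => hv (h ▸ ha)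
  have hbv : b ≠ v := fun h => hv (h ▸ hb)
  have hadj' : F.adj b a = true := (hI.symm a b) ▸ hadj
  have hcard2 : 2 ≤ F.V.card := Finset.one_lt_card.mpr ⟨a, ha, b, hb, hab⟩
  have huniq' : ∀ y ∈ F.V, F.w y = -1 → y = a := by
    intro y hy hyw
    by_contra hne
    rcases eq_or_ne y b with rfl | hyb
    · exact hwb hyw
    · exact hother y hy hne hyb hyw
  obtain ⟨hcount, htips⟩ := hG a hcard2 ha hwa huniq'
  have hmua : 2 ≤ F.μ a := mu_ge_two hI hcard2 ha hwa huniq'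
  constructor
  · rw [V_cross, Finset.filter_insert]
    have hpv : ¬ ((F.blowupCross a b v).μ v = 1) := by
      rw [mucross_v]
      have := hI.mupos b
      omega
    rw [if_neg hpv]
    have heq : F.V.filter (fun u => (F.blowupCross a b v).μ u = 1)
        = F.V.filter (fun u => F.μ u = 1) := by
      refine Finset.filter_congr (fun u hu => ?_)
      have huv : u ≠ v := fun h => hv (h ▸ hu)
      rw [mucross_other huv]
    rw [heq]
    exact hcount
  · intro u hu hmu
    rcases Finset.mem_insert.mp hu with rfl | hu'
    · rw [mucross_v] at hmu
      have := hI.mupos a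
      omega
    · have huv : u ≠ v := fun h => hv (h ▸ hu')
      rw [mucross_other huv] at hmu
      have hua : u ≠ a := fun h => by rw [h] at hmu; omega
      rcases eq_or_ne u b with rfl | hub
      · -- u = b : its degree is preserved
        have hfb := htips u hu' hmu
        have hamem : a ∈ F.V.filter (fun t => F.adj u t = true) :=
          Finset.mem_filter.mpr ⟨ha, hadj'⟩
        have hfb1 : (F.V.filter (fun t => F.adj u t = true)).card = 1 := by
          have : 1 ≤ (F.V.filter (fun t => F.adj u t = true)).card :=
            Finset.card_pos.mpr ⟨a, hamem⟩
          omega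
        rw [blowupCross_comm hab, V_cross, filter_cross_a hI hb ha hv]
        have hnv : v ∉ (F.V.filter (fun t => F.adj u t = true)).erase a :=
          fun h => hv (Finset.mem_filter.mp (Finset.mem_erase.mp h).2).1
        rw [Finset.card_insert_of_notMem hnv, Finset.card_erase_of_mem hamem, hfb1]
      · rw [V_cross, filter_cross_other hI hv hu' hua hub]
        exact htips u hu' hmu

lemma good_cross_both (hI : Inv F) (ha : a ∈ F.V) (hb : b ∈ F.V)
    (hadj : F.adj a b = true) (hv : v ∉ F.V)
    (hwa : F.w a = -1) (hwb : F.w b = -1) :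
    ((F.blowupCross a b v).V.filter fun u => (F.blowupCross a b v).μ u = 1).card = 2 ∧
      ∀ u ∈ (F.blowupCross a b v).V, (F.blowupCross a b v).μ u = 1 →
        ((F.blowupCross a b v).V.filter fun t => (F.blowupCross a b v).adj u t = true).card ≤ 1 := by
  have hab : a ≠ b := by
    intro h
    rw [h, hI.irrefl] at hadj
    exact Bool.false_ne_true hadj
  have hav : a ≠ v := fun h => hv (h ▸ ha)
  have hbv : b ≠ v := fun h => hv (h ▸ hb)
  have hadj' : F.adj b a = true := (hI.symm a b) ▸ hadj
  have hbmem : b ∈ F.V.filter (fun t => F.adj a t = true) := Finset.mem_filter.mpr ⟨hb, hadj⟩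
  have hamem : a ∈ F.V.filter (fun t => F.adj b t = true) := Finset.mem_filter.mpr ⟨ha, hadj'⟩
  have hsuma : ∑ u ∈ F.V.filter (fun t => F.adj a t = true), (F.μ u : ℤ) = (F.μ a : ℤ) := by
    have := hI.fib a ha
    rw [hwa] at this
    rw [this]
    ring
  have hsumb : ∑ u ∈ F.V.filter (fun t => F.adj b t = true), (F.μ u : ℤ) = (F.μ b : ℤ) := by
    have := hI.fib b hb
    rw [hwb] at this
    rw [this]
    ring
  have hnonneg : ∀ (s : Finset ℕ), ∀ u ∈ s, (0 : ℤ) ≤ (F.μ u : ℤ) :=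
    fun s u _ => Int.natCast_nonneg _
  have hba : (F.μ b : ℤ) ≤ (F.μ a : ℤ) := by
    have := Finset.single_le_sum (hnonneg _) hbmem
    rw [hsuma] at this
    exact this
  have hab' : (F.μ a : ℤ) ≤ (F.μ b : ℤ) := by
    have := Finset.single_le_sum (hnonneg _) hamem
    rw [hsumb] at this
    exact this
  have hmueq : (F.μ a : ℤ) = (F.μ b : ℤ) := le_antisymm hab' hba
  have hfilter_singleton : ∀ x y : ℕ, x ∈ F.V → y ∈ F.V → F.adj x y = true →
      (∑ u ∈ F.V.filter (fun t => F.adj x t = true), (F.μ u : ℤ)) = (F.μ y : ℤ) →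
      F.V.filter (fun t => F.adj x t = true) = {y} := by
    intro x y hx hy hxy hsum
    have hymem : y ∈ F.V.filter (fun t => F.adj x t = true) := Finset.mem_filter.mpr ⟨hy, hxy⟩
    have herase : ∑ u ∈ (F.V.filter (fun t => F.adj x t = true)).erase y, (F.μ u : ℤ) = 0 := by
      rw [Finset.sum_erase_eq_sub hymem, hsum]
      ring
    rw [Finset.sum_eq_zero_iff_of_nonneg (fun u _ => Int.natCast_nonneg _)] at herase
    have hempty : (F.V.filter (fun t => F.adj x t = true)).erase y = ∅ := by
      refine Finset.eq_empty_iff_forall_notMem.mpr (fun z hz => ?_)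
      have h0 := herase z hz
      have h1 := hI.mupos z
      have : F.μ z = 0 := by exact_mod_cast h0
      omega
    have := (Finset.erase_eq_empty_iff _ _).mp hempty
    rcases this with h | h
    · exact absurd (h ▸ hymem) (Finset.notMem_empty y)
    · exact h
  have hNa : F.V.filter (fun t => F.adj a t = true) = {b} :=
    hfilter_singleton a b ha hb hadj (by rw [hsuma, hmueq])
  have hNb : F.V.filter (fun t => F.adj b t = true) = {a} :=
    hfilter_singleton b a hb ha hadj' (by rw [hsumb, hmueq])
  -- connectivity forces V = {a, b}
  have hreach : ∀ z, Relation.ReflTransGen (fun p q => F.adj p q = true) a z →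
      z = a ∨ z = b := by
    intro z hp
    induction hp with
    | refl => exact Or.inl rfl
    | tail h1 h2 ih =>
      rcases ih with h | h
      · have hm : _ ∈ F.V.filter (fun t => F.adj a t = true) :=
          Finset.mem_filter.mpr ⟨(hI.supp h2).2, h ▸ h2⟩
        rw [hNa] at hm
        exact Or.inr (Finset.mem_singleton.mp hm)
      · have hm : _ ∈ F.V.filter (fun t => F.adj b t = true) :=
          Finset.mem_filter.mpr ⟨(hI.supp h2).2, h ▸ h2⟩
        rw [hNb] at hm
        exact Or.inl (Finset.mem_singleton.mp hm)
  have hVab : F.V = {a, b} := by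
    apply Finset.Subset.antisymm
    · intro z hz
      have := hreach z (hI.conn a ha z hz)
      rcases this with rfl | rfl
      · exact Finset.mem_insert_self _ _
      · exact Finset.mem_insert_of_mem (Finset.mem_singleton.mpr rfl)
    · intro z hz
      rcases Finset.mem_insert.mp hz with rfl | hz'
      · exact ha
      · rw [Finset.mem_singleton.mp hz']
        exact hb
  have htot := hI.tot
  rw [hVab, Finset.sum_pair hab, hwa, hwb] at htot
  have hma : F.μ a = 1 := by
    have h1 := hI.mupos a
    have h2 := hI.mupos b
    have h3 : (F.μ a : ℤ) + (F.μ b : ℤ) = 2 := by linarith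
    have h4 : F.μ a + F.μ b = 2 := by exact_mod_cast h3
    omega
  have hmb : F.μ b = 1 := by
    have h4 : F.μ a + F.μ b = 2 := by
      have h3 : (F.μ a : ℤ) + (F.μ b : ℤ) = 2 := by linarith
      exact_mod_cast h3
    omega
  constructor
  · rw [V_cross, Finset.filter_insert]
    have hpv : ¬ ((F.blowupCross a b v).μ v = 1) := by
      rw [mucross_v, hma, hmb]
      omega
    rw [if_neg hpv]
    have heq : F.V.filter (fun u => (F.blowupCross a b v).μ u = 1) = F.V := by
      refine Finset.filter_true_of_mem (fun u hu => ?_)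
      have huv : u ≠ v := fun h => hv (h ▸ hu)
      rw [mucross_other huv, hVab] at *
      rcases Finset.mem_insert.mp hu with rfl | hu'
      · exact hma
      · rw [Finset.mem_singleton.mp hu']
        exact hmb
    rw [heq, hVab]
    exact Finset.card_pair hab
  · intro u hu hmu
    rcases Finset.mem_insert.mp hu with rfl | hu'
    · rw [mucross_v, hma, hmb] at hmu
      omega
    · rcases eq_or_ne u a with rfl | hua
      · rw [V_cross, filter_cross_a hI ha hb hv, hNa, Finset.erase_singleton,
          Finset.card_insert_of_notMem (Finset.notMem_empty v), Finset.card_empty]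
      · have hub : u = b := by
          rw [hVab] at hu'
          rcases Finset.mem_insert.mp hu' with rfl | h
          · exact absurd rfl hua
          · exact Finset.mem_singleton.mp h
        subst hub
        rw [blowupCross_comm hab, V_cross, filter_cross_a hI hb ha hv, hNb,
          Finset.erase_singleton,
          Finset.card_insert_of_notMem (Finset.notMem_empty v), Finset.card_empty]

lemma good_cross (hI : Inv F) (ha : a ∈ F.V) (hb : b ∈ F.V)
    (hadj : F.adj a b = true) (hv : v ∉ F.V) (hG : Good F) :
    Good (F.blowupCross a b v) := by
  intro d hcard hd hdw huniq
  have hab : a ≠ b := by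
    intro h
    rw [h, hI.irrefl] at hadj
    exact Bool.false_ne_true hadj
  have hadj' : F.adj b a = true := (hI.symm a b) ▸ hadj
  have hcard2 : 2 ≤ F.V.card := Finset.one_lt_card.mpr ⟨a, ha, b, hb, hab⟩
  have hvd : v = d := huniq v (Finset.mem_insert_self _ _) wcross_v
  subst hvd
  have hother : ∀ y ∈ F.V, y ≠ a → y ≠ b → F.w y ≠ -1 := by
    intro y hy hya hyb hyw
    have hyv : y ≠ v := fun h => hv (h ▸ hy)
    have : (F.blowupCross a b v).w y = -1 := by rw [wcross_other hyv hya hyb]; exact hyw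
    exact hyv (huniq y (Finset.mem_insert_of_mem hy) this)
  by_cases hwa : F.w a = -1
  · by_cases hwb : F.w b = -1
    · exact good_cross_both hI ha hb hadj hv hwa hwb
    · exact good_cross_core hI ha hb hadj hv hG hwa hwb hother
  · by_cases hwb : F.w b = -1
    · rw [blowupCross_comm hab]
      exact good_cross_core hI hb ha hadj' hv hG hwb hwa
        (fun y hy h1 h2 => hother y hy h2 h1)
    · exfalso
      obtain ⟨x0, hx0, hx0w⟩ := exists_neg_one hI hcard2
      rcases eq_or_ne x0 a with rfl | hxa
      · exact hwa hx0w
      · rcases eq_or_ne x0 b with rfl | hxb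
        · exact hwb hx0w
        · exact hother x0 hx0 hxa hxb hx0w

lemma good_of_isFiber (hF : IsFiber F) : Good F := by
  induction hF with
  | base =>
    intro d hcard _ _ _
    norm_num [show (Config.mk {0} (fun _ _ => false) (fun _ => 0) (fun _ => 1)).V
      = {0} from rfl] at hcard
  | free F c v hF' hc hv ih => exact good_free (inv_of_isFiber hF') hc hv ih
  | cross F a b v hF' ha hb hadj hv ih => exact good_cross (inv_of_isFiber hF') ha hb hadj hv ih

end UMOCAux

/-- Lemma 2.7(v): if a singular fiber `F` of a `ℙ¹`-ruling has a unique
`(−1)`-curve `C`, then `μ(C) > 1`, and there are exactly two components of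
`F` of multiplicity one; they are tips of the fiber (they meet at most one
other component). -/
theorem unique_minus_one_curve_fiber (F : Config) (hF : Config.IsFiber F)
    (hsing : 2 ≤ F.V.card)
    (c : ℕ) (hc : c ∈ F.V) (hcw : F.w c = -1)
    (huniq : ∀ c' ∈ F.V, F.w c' = -1 → c' = c) :
    1 < F.μ c ∧
      (F.V.filter fun v => F.μ v = 1).card = 2 ∧
      (∀ v ∈ F.V, F.μ v = 1 → (F.V.filter fun u => F.adj v u = true).card ≤ 1) := by
  have hI := UMOCAux.inv_of_isFiber hF
  have h2 := UMOCAux.mu_ge_two hI hsing hc hcw huniq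
  have hg := UMOCAux.good_of_isFiber hF c hsing hc hcw huniq
  exact ⟨by omega, hg.1, hg.2⟩
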